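/- arXiv:1009.0795 — 2 statements merged into one kernel-verified Lean document; each statement's English description precedes it below -/
import Mathlib

section
/- Let p > 1 and let v : ℝ^{m×n} → ℝ be continuous and positively p-homogeneous. Suppose there exists q ∈ ℝᵐ such that for all u ∈ W^{1,∞}_{Γ_ϱ}(Ω_ϱ;ℝᵐ) one has ∫_{Γ_ϱ} q·u dS + v(0)|Ω_ϱ| ≤ ∫_{Ω_ϱ} v(∇u(x)) dx. Then the same inequality holds with q = 0; that is, ∫_{Ω_ϱ} v(∇u(x)) dx ≥ 0 for all u ∈ W^{1,∞}_{Γ_ϱ}(Ω_ϱ;ℝᵐ). -/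
open MeasureTheory Filter
open scoped RealInnerProductSpace
noncomputable section

abbrev Vec (n : ℕ) := EuclideanSpace ℝ (Fin n)
abbrev Mat (m n : ℕ) := EuclideanSpace ℝ (Fin m × Fin n)

noncomputable def gradMat {m n : ℕ} (u : Vec n → Vec m) (x : Vec n) : Mat m n :=
  (EuclideanSpace.equiv (Fin m × Fin n) ℝ).symm
    (fun p => fderiv ℝ u x (EuclideanSpace.single p.2 1) p.1)

/-- A standard boundary domain `Ω_ϱ` with unit normal `ϱ`: a bounded open domain contained
in the half-space `{ϱ·x < a}` whose boundary contains a nonempty part `Γ` which is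
relatively open in the hyperplane `{ϱ·x = a}`. -/
structure StdBoundaryDomain (n : ℕ) where
  ϱ : Vec n
  hϱ : ‖ϱ‖ = 1
  a : ℝ
  Ω : Set (Vec n)
  hopen : IsOpen Ω
  hbd : Bornology.IsBounded Ω
  hsub : Ω ⊆ {x : Vec n | ⟪ϱ, x⟫ < a}
  Γ : Set (Vec n)
  hΓsub : Γ ⊆ frontier Ω ∩ {x : Vec n | ⟪ϱ, x⟫ = a}
  hΓrelopen : ∀ x ∈ Γ, ∃ ε > 0, Metric.ball x ε ∩ {y : Vec n | ⟪ϱ, y⟫ = a} ⊆ Γ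
  hΓne : Γ.Nonempty

/-- Membership in `W^{1,∞}_{Γ_ϱ}(Ω_ϱ;ℝᵐ)`: a Lipschitz map vanishing on `∂Ω_ϱ \ Γ_ϱ`. -/
def MemW1inftyGamma {m n : ℕ} (D : StdBoundaryDomain n) (u : Vec n → Vec m) : Prop :=
  (∃ K : NNReal, LipschitzWith K u) ∧ ∀ x ∈ frontier D.Ω \ D.Γ, u x = 0

lemma gradMat_smul' {m n : ℕ} (t : ℝ) (ht : 0 < t) (u : Vec n → Vec m) (x : Vec n) :
    gradMat (fun y => t • u y) x = t • gradMat u x := by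
  by_cases h : DifferentiableAt ℝ u x
  · unfold gradMat
    rw [← _root_.map_smul ((EuclideanSpace.equiv (Fin m × Fin n) ℝ).symm)]
    congr 1
    funext pr
    rw [fderiv_fun_const_smul h]
    simp
  · have h2 : ¬ DifferentiableAt ℝ (fun y => t • u y) x := by
      intro hd
      have := hd.const_smul t⁻¹
      simp only [Pi.smul_def, smul_smul, inv_mul_cancel₀ ht.ne', one_smul] at this
      exact h this
    unfold gradMat
    rw [fderiv_zero_of_not_differentiableAt h, fderiv_zero_of_not_differentiableAt h2]
    simp
    ext pr
    simp

/-- for a continuous positively `p`-homogeneous `v` (`p > 1`), if the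
quasiconvexity-at-the-boundary inequality holds with some `q ∈ ℝᵐ`, then it holds with
`q = 0`, i.e. `∫_{Ω_ϱ} v(∇u) ≥ 0` for all admissible `u`. -/
theorem stmt2 {m n : ℕ} (p : ℝ) (hp : 1 < p) (v : Mat m n → ℝ) (hv : Continuous v)
    (hhom : ∀ α : ℝ, 0 ≤ α → ∀ s : Mat m n, v (α • s) = α ^ p * v s)
    (D : StdBoundaryDomain n) (q : Vec m)
    (hqcb : ∀ u : Vec n → Vec m, MemW1inftyGamma D u →
      (∫ x in D.Γ, ⟪q, u x⟫ ∂μH[(n : ℝ) - 1]) + v 0 * (volume D.Ω).toReal ≤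
        ∫ x in D.Ω, v (gradMat u x)) :
    ∀ u : Vec n → Vec m, MemW1inftyGamma D u →
      0 ≤ ∫ x in D.Ω, v (gradMat u x) := by
  have hv0 : v 0 = 0 := by
    have := hhom 0 le_rfl 0
    simpa [Real.zero_rpow (by linarith : p ≠ 0)] using this
  intro u hu
  set A := ∫ x in D.Γ, ⟪q, u x⟫ ∂μH[(n : ℝ) - 1] with hA
  set B := ∫ x in D.Ω, v (gradMat u x) with hB
  have key : ∀ t : ℝ, 0 < t → t * A ≤ t ^ p * B := by
    intro t ht
    obtain ⟨⟨K, hK⟩, hbdry⟩ := hu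
    have hmem : MemW1inftyGamma D (fun y => t • u y) := by
      refine ⟨⟨‖t‖₊ * K, (lipschitzWith_smul t).comp hK⟩,
        fun x hx => by show t • u x = 0; rw [hbdry x hx, smul_zero]⟩
    have h1 := hqcb _ hmem
    have e1 : (∫ x in D.Γ, ⟪q, t • u x⟫ ∂μH[(n : ℝ) - 1]) = t * A := by
      simp_rw [real_inner_smul_right, ← smul_eq_mul]
      rw [integral_smul]
    have e2 : (∫ x in D.Ω, v (gradMat (fun y => t • u y) x)) = t ^ p * B := by
      simp_rw [gradMat_smul' t ht u, hhom t ht.le, ← smul_eq_mul]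
      rw [integral_smul]
    rw [e1, e2, hv0] at h1
    linarith
  by_contra hBneg
  push_neg at hBneg
  have key2 : ∀ t : ℝ, 1 ≤ t → A ≤ t ^ (p - 1) * B := by
    intro t ht1
    have ht : (0:ℝ) < t := by linarith
    have h1 := key t ht
    have hpow : t ^ p = t * t ^ (p - 1) := by
      rw [show p = 1 + (p - 1) by ring, Real.rpow_add ht, Real.rpow_one]
      ring_nf
    rw [hpow, mul_assoc] at h1
    exact le_of_mul_le_mul_left h1 ht
  have hTop : Tendsto (fun t : ℝ => t ^ (p - 1) * B) atTop atBot :=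
    (tendsto_rpow_atTop (by linarith : 0 < p - 1)).atTop_mul_const_of_neg hBneg
  obtain ⟨t, ht1, ht2⟩ :=
    ((eventually_ge_atTop (1:ℝ)).and (hTop.eventually (eventually_lt_atBot A))).exists
  linarith [key2 t ht1]
end
end

section
/- Suppose n ≥ 2 and p > 1. The set H^ϱ = {δ̄_{ϱ,∇u} : u ∈ W^{1,p}₀(B(0,1);ℝᵐ)} of measures is convex; i.e., for u₁, u₂ ∈ W^{1,p}₀(B(0,1);ℝᵐ) and λ ∈ [0,1] there exists u ∈ W^{1,p}₀(B(0,1);ℝᵐ) such that for every continuous positively p-homogeneous v : ℝ^{m×n} → ℝ, ∫_{B_ϱ} v(∇u) dx = λ ∫_{B_ϱ} v(∇u₁) dx + (1−λ) ∫_{B_ϱ} v(∇u₂) dx. -/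
open MeasureTheory Filter
open scoped ENNReal
open scoped RealInnerProductSpace
noncomputable section

/-- `u ∈ W^{1,p}₀(B(0,1);ℝᵐ)` (extended by zero to `ℝⁿ`). -/
def MemW1p0Ball {m n : ℕ} (p : ℝ) (u : Vec n → Vec m) : Prop :=
  Differentiable ℝ u ∧ tsupport u ⊆ Metric.closedBall 0 1 ∧
  MemLp u (ENNReal.ofReal p) volume ∧
  MemLp (gradMat u) (ENNReal.ofReal p) volume

namespace Stmt8Aux

variable {m n : ℕ}

lemma gradMat_eq_zero {u : Vec n → Vec m} {x : Vec n} (h : x ∉ tsupport u) :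
    gradMat u x = 0 := by
  have hev : u =ᶠ[nhds x] fun _ => 0 := by
    refine eventually_of_mem (((isClosed_tsupport u).isOpen_compl).mem_nhds h) ?_
    intro y hy
    exact image_eq_zero_of_notMem_tsupport hy
  have h0 : fderiv ℝ u x = 0 := by
    rw [hev.fderiv_eq]
    exact fderiv_const_apply 0
  unfold gradMat
  rw [h0]
  rw [show (fun p : Fin m × Fin n =>
      (0 : Vec n →L[ℝ] Vec m) (EuclideanSpace.single p.2 1) p.1) = 0 by
    funext q; simp]
  exact map_zero _

lemma gradMat_combo {u₁ u₂ : Vec n → Vec m} (h1 : Differentiable ℝ u₁)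
    (h2 : Differentiable ℝ u₂) (a b : ℝ) (x : Vec n) :
    gradMat (fun y => a • u₁ y + b • u₂ y) x = a • gradMat u₁ x + b • gradMat u₂ x := by
  have hf : fderiv ℝ (fun y => a • u₁ y + b • u₂ y) x
      = a • fderiv ℝ u₁ x + b • fderiv ℝ u₂ x :=
    (((h1 x).hasFDerivAt.const_smul a).add ((h2 x).hasFDerivAt.const_smul b)).fderiv
  unfold gradMat
  rw [hf]
  rw [show (fun p : Fin m × Fin n =>
      (a • fderiv ℝ u₁ x + b • fderiv ℝ u₂ x) (EuclideanSpace.single p.2 1) p.1)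
      = a • (fun p : Fin m × Fin n => fderiv ℝ u₁ x (EuclideanSpace.single p.2 1) p.1)
        + b • (fun p : Fin m × Fin n => fderiv ℝ u₂ x (EuclideanSpace.single p.2 1) p.1) by
    funext q
    simp [ContinuousLinearMap.add_apply, ContinuousLinearMap.smul_apply]]
  rw [map_add, _root_.map_smul, _root_.map_smul]

/-- map of volume under `x ↦ 5 • (x - c)`. -/
lemma map_T (c : Vec n) :
    Measure.map (fun x : Vec n => (5:ℝ) • (x - c)) (volume : Measure (Vec n))
      = ENNReal.ofReal (((5:ℝ)^n)⁻¹) • volume := by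
  have h5 : (5:ℝ) ≠ 0 := by norm_num
  have hcomp : (fun x : Vec n => (5:ℝ) • (x - c))
      = (fun y : Vec n => y + (-((5:ℝ) • c))) ∘ (fun x : Vec n => (5:ℝ) • x) := by
    funext x
    simp [smul_sub, sub_eq_add_neg]
  rw [hcomp, ← Measure.map_map (measurable_add_const _) (measurable_const_smul _)]
  rw [show (fun x : Vec n => (5:ℝ) • x) = ((5:ℝ) • ·) from rfl]
  rw [Measure.map_addHaar_smul (volume : Measure (Vec n)) h5]
  rw [Measure.map_smul, map_add_right_eq_self]
  congr 1
  rw [finrank_euclideanSpace_fin]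
  rw [abs_of_nonneg (by positivity)]

lemma measurableEmbedding_T (c : Vec n) :
    MeasurableEmbedding (fun x : Vec n => (5:ℝ) • (x - c)) := by
  have : (fun x : Vec n => (5:ℝ) • (x - c))
      = ⇑((Homeomorph.addRight (-c)).trans
          (Homeomorph.smul (Units.mk0 (5:ℝ) (by norm_num)))) := by
    funext x
    simp [Units.smul_def, sub_eq_add_neg]
  rw [this]
  exact Homeomorph.measurableEmbedding _

lemma setint_T (c : Vec n) (g : Vec n → ℝ) (S : Set (Vec n)) :
    ∫ x in (fun x : Vec n => (5:ℝ) • (x - c)) ⁻¹' S, g ((5:ℝ) • (x - c))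
      = ((5:ℝ)^n)⁻¹ * ∫ y in S, g y := by
  have h := (measurableEmbedding_T c).setIntegral_map (μ := (volume : Measure (Vec n))) g S
  rw [map_T c] at h
  rw [← h, Measure.restrict_smul, integral_smul_measure,
    ENNReal.toReal_ofReal (by positivity), smul_eq_mul]

lemma memLp_comp_T {E : Type*} [NormedAddCommGroup E] (c : Vec n) {q : ℝ≥0∞}
    {f : Vec n → E} (hf : MemLp f q volume) :
    MemLp (fun x => f ((5:ℝ) • (x - c))) q volume := by
  have hT : AEMeasurable (fun x : Vec n => (5:ℝ) • (x - c)) volume :=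
    ((continuous_id.sub continuous_const).const_smul (5:ℝ)).measurable.aemeasurable
  have h1 : MemLp f q (Measure.map (fun x : Vec n => (5:ℝ) • (x - c)) volume) := by
    rw [map_T c]
    exact hf.smul_measure ENNReal.ofReal_ne_top
  exact (memLp_map_measure_iff h1.aestronglyMeasurable hT).mp h1

lemma vzero {p : ℝ} (hp : 0 < p) {v : Mat m n → ℝ}
    (hhom : ∀ α : ℝ, 0 ≤ α → ∀ s : Mat m n, v (α • s) = α ^ p * v s) : v 0 = 0 := by
  have h := hhom 0 le_rfl 0
  rw [smul_zero, Real.zero_rpow hp.ne', zero_mul] at h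
  exact h

lemma vbound {p : ℝ} (hp : 0 < p) {v : Mat m n → ℝ} (hv : Continuous v)
    (hhom : ∀ α : ℝ, 0 ≤ α → ∀ s : Mat m n, v (α • s) = α ^ p * v s) :
    ∃ C : ℝ, 0 ≤ C ∧ ∀ s : Mat m n, |v s| ≤ C * ‖s‖ ^ p := by
  obtain ⟨C, hC⟩ := (isCompact_sphere (0 : Mat m n) 1).exists_bound_of_continuousOn
    hv.continuousOn
  refine ⟨max C 0, le_max_right _ _, fun s => ?_⟩
  rcases eq_or_ne s 0 with rfl | hs
  · rw [vzero hp hhom]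
    simp [Real.zero_rpow hp.ne']
  · have hns : (0:ℝ) < ‖s‖ := norm_pos_iff.mpr hs
    set w : Mat m n := ‖s‖⁻¹ • s with hw
    have hwsph : w ∈ Metric.sphere (0 : Mat m n) 1 := by
      simp only [mem_sphere_iff_norm, sub_zero, hw, norm_smul, norm_inv, norm_norm]
      field_simp
    have hsw : s = ‖s‖ • w := by
      rw [hw, smul_smul, mul_inv_cancel₀ hns.ne', one_smul]
    have hv_eq : v s = ‖s‖ ^ p * v w := by
      conv_lhs => rw [hsw]
      exact hhom ‖s‖ hns.le w
    rw [hv_eq, abs_mul, abs_of_nonneg (Real.rpow_nonneg hns.le p)]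
    calc ‖s‖ ^ p * |v w| ≤ ‖s‖ ^ p * C := by
          have := hC w hwsph
          rw [Real.norm_eq_abs] at this
          exact mul_le_mul_of_nonneg_left this (Real.rpow_nonneg hns.le p)
      _ ≤ max C 0 * ‖s‖ ^ p := by
          rw [mul_comm]
          exact mul_le_mul_of_nonneg_right (le_max_left _ _) (Real.rpow_nonneg hns.le p)

lemma integrable_v_comp {p : ℝ} (hp : 1 < p) {v : Mat m n → ℝ} (hv : Continuous v)
    (hhom : ∀ α : ℝ, 0 ≤ α → ∀ s : Mat m n, v (α • s) = α ^ p * v s)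
    {F : Vec n → Mat m n} (hF : MemLp F (ENNReal.ofReal p) volume) :
    Integrable (fun x => v (F x)) volume := by
  have hp0 : (0:ℝ) < p := lt_trans one_pos hp
  obtain ⟨C, hC0, hC⟩ := vbound hp0 hv hhom
  have hint : Integrable (fun x => C * ‖F x‖ ^ p) volume := by
    have h1 : Integrable (fun x => ‖F x‖ ^ (ENNReal.ofReal p).toReal) volume :=
      hF.integrable_norm_rpow (by simp [hp0, hp0.ne']) ENNReal.ofReal_ne_top
    rw [ENNReal.toReal_ofReal hp0.le] at h1
    exact h1.const_mul C
  refine hint.mono' (hv.comp_aestronglyMeasurable hF.aestronglyMeasurable) ?_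
  refine Eventually.of_forall fun x => ?_
  rw [Real.norm_eq_abs]
  exact hC (F x)

lemma setIntegral_shrink {f : Vec n → ℝ} {S' S : Set (Vec n)} (hS : MeasurableSet S)
    (hS' : MeasurableSet S') (hsub : S' ⊆ S)
    (hf : ∀ᵐ x ∂(volume : Measure (Vec n)), x ∈ S \ S' → f x = 0) :
    ∫ x in S, f x = ∫ x in S', f x := by
  rw [← integral_indicator hS, ← integral_indicator hS']
  refine integral_congr_ae ?_
  filter_upwards [hf] with x hx
  by_cases h1 : x ∈ S'
  · rw [Set.indicator_of_mem h1, Set.indicator_of_mem (hsub h1)]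
  · rw [Set.indicator_of_notMem h1]
    by_cases h2 : x ∈ S
    · rw [Set.indicator_of_mem h2]
      exact hx ⟨h2, h1⟩
    · rw [Set.indicator_of_notMem h2]

/-- The rescaled/translated copy of `u` into the ball `B(c,1/5)`. -/
lemma rescale {p : ℝ} (hp : 1 < p) (ϱ : Vec n) (hϱ : ‖ϱ‖ = 1) (c : Vec n)
    (hc : ‖c‖ ≤ 1/2) (hcϱ : ⟪ϱ, c⟫ = 0) {u : Vec n → Vec m} (hu : MemW1p0Ball p u) :
    ∃ U : Vec n → Vec m, MemW1p0Ball p U ∧ tsupport U ⊆ Metric.closedBall c (1/5) ∧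
      ∀ v : Mat m n → ℝ, Continuous v →
        (∀ α : ℝ, 0 ≤ α → ∀ s : Mat m n, v (α • s) = α ^ p * v s) →
        ∫ x in Metric.ball (0 : Vec n) 1 ∩ {x : Vec n | ⟪ϱ, x⟫ < 0}, v (gradMat U x)
          = ∫ x in Metric.ball (0 : Vec n) 1 ∩ {x : Vec n | ⟪ϱ, x⟫ < 0},
              v (gradMat u x) := by
  obtain ⟨hudiff, husupp, humem, hugrad⟩ := hu
  have hp0 : (0:ℝ) < p := lt_trans one_pos hp
  set a : ℝ := (5:ℝ) ^ ((n:ℝ)/p - 1) with ha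
  set b : ℝ := (5:ℝ) ^ ((n:ℝ)/p) with hb
  have hb0 : 0 ≤ b := Real.rpow_nonneg (by norm_num) _
  have hab : a * 5 = b := by
    rw [ha, hb, Real.rpow_sub (by norm_num : (0:ℝ) < 5), Real.rpow_one]
    field_simp
  set T : Vec n → Vec n := fun x => (5:ℝ) • (x - c) with hT
  set U : Vec n → Vec m := fun x => a • u (T x) with hU
  have hTdiff : ∀ x, HasFDerivAt T ((5:ℝ) • ContinuousLinearMap.id ℝ (Vec n)) x :=
    fun x => ((hasFDerivAt_id x).sub_const c).const_smul (5:ℝ)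
  have hUdiff : Differentiable ℝ U := fun x =>
    ((((hudiff (T x)).hasFDerivAt).comp x (hTdiff x)).const_smul a).differentiableAt
  have hgrad : ∀ x, gradMat U x = b • gradMat u (T x) := by
    intro x
    have hfd : HasFDerivAt U
        (a • ((fderiv ℝ u (T x)).comp ((5:ℝ) • ContinuousLinearMap.id ℝ (Vec n)))) x :=
      (((hudiff (T x)).hasFDerivAt).comp x (hTdiff x)).const_smul a
    unfold gradMat
    rw [hfd.fderiv]
    rw [show (fun q : Fin m × Fin n =>
        (a • ((fderiv ℝ u (T x)).comp ((5:ℝ) • ContinuousLinearMap.id ℝ (Vec n))))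
          (EuclideanSpace.single q.2 1) q.1)
        = b • (fun q : Fin m × Fin n =>
            fderiv ℝ u (T x) (EuclideanSpace.single q.2 1) q.1) by
      funext q
      simp only [ContinuousLinearMap.smul_apply, ContinuousLinearMap.coe_comp',
        Function.comp_apply, ContinuousLinearMap.coe_id', id_eq, _root_.map_smul,
        Pi.smul_apply, PiLp.smul_apply, smul_eq_mul]
      rw [← hab]
      ring]
    rw [_root_.map_smul]
  have hUsupp : tsupport U ⊆ Metric.closedBall c (1/5) := by
    refine closure_minimal ?_ Metric.isClosed_closedBall
    intro x hx
    have hx' : u (T x) ≠ 0 := by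
      intro h0
      apply hx
      simp only [hU, h0, smul_zero]
    have h1 : T x ∈ Metric.closedBall (0 : Vec n) 1 :=
      husupp (subset_closure (Function.mem_support.mpr hx'))
    rw [Metric.mem_closedBall, dist_zero_right, hT, norm_smul, Real.norm_eq_abs] at h1
    rw [Metric.mem_closedBall, dist_eq_norm]
    rw [abs_of_nonneg (by norm_num : (0:ℝ) ≤ 5)] at h1
    linarith
  have hUmem : MemLp U (ENNReal.ofReal p) volume := by
    have := (memLp_comp_T (E := Vec m) c humem).const_smul a
    exact this
  have hUgrad : MemLp (gradMat U) (ENNReal.ofReal p) volume := by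
    rw [show gradMat U = fun x => b • gradMat u (T x) from funext hgrad]
    exact (memLp_comp_T (E := Mat m n) c hugrad).const_smul b
  have hcb : Metric.closedBall c (1/5 : ℝ) ⊆ Metric.closedBall (0 : Vec n) 1 := by
    refine Metric.closedBall_subset_closedBall' ?_
    rw [dist_zero_right]
    linarith
  refine ⟨U, ⟨hUdiff, hUsupp.trans hcb, hUmem, hUgrad⟩, hUsupp, ?_⟩
  intro v hv hhom
  have hv0 : v 0 = 0 := vzero hp0 hhom
  have hHopen : IsOpen {x : Vec n | ⟪ϱ, x⟫ < 0} :=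
    isOpen_lt (continuous_const.inner continuous_id) continuous_const
  set S := Metric.ball (0 : Vec n) 1 ∩ {x : Vec n | ⟪ϱ, x⟫ < 0} with hS
  set S' := Metric.ball c (1/5 : ℝ) ∩ {x : Vec n | ⟪ϱ, x⟫ < 0} with hS'
  have hSmeas : MeasurableSet S := (Metric.isOpen_ball.inter hHopen).measurableSet
  have hS'meas : MeasurableSet S' := (Metric.isOpen_ball.inter hHopen).measurableSet
  have hsub : S' ⊆ S := by
    refine Set.inter_subset_inter ?_ le_rfl
    refine Metric.ball_subset_ball' ?_
    rw [dist_zero_right]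
    linarith
  have hpre : T ⁻¹' S = S' := by
    ext x
    simp only [Set.mem_preimage, hS, hS', Set.mem_inter_iff, Metric.mem_ball,
      Set.mem_setOf_eq, dist_zero_right, dist_eq_norm, hT, norm_smul,
      Real.norm_eq_abs, abs_of_nonneg (by norm_num : (0:ℝ) ≤ 5),
      real_inner_smul_right, inner_sub_right, hcϱ, sub_zero]
    constructor
    · rintro ⟨hx1, hx2⟩
      exact ⟨by linarith, by nlinarith⟩
    · rintro ⟨hx1, hx2⟩
      exact ⟨by linarith, by nlinarith⟩
  have step1 : ∫ x in S, v (gradMat U x) = ∫ x in S', v (gradMat U x) := by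
    refine setIntegral_shrink hSmeas hS'meas hsub ?_
    have hntr : Nontrivial (Vec n) := by
      refine nontrivial_of_ne ϱ 0 fun h => ?_
      rw [h, norm_zero] at hϱ
      norm_num at hϱ
    have hsph : volume (Metric.sphere c (1/5 : ℝ)) = 0 :=
      Measure.addHaar_sphere volume c (1/5)
    filter_upwards [measure_eq_zero_iff_ae_notMem.mp hsph] with x hxs hx
    have hxH : x ∈ {x : Vec n | ⟪ϱ, x⟫ < 0} := hx.1.2
    have hxnb : x ∉ Metric.ball c (1/5 : ℝ) := fun hb => hx.2 ⟨hb, hxH⟩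
    have hxcb : x ∉ Metric.closedBall c (1/5 : ℝ) := by
      intro hcb'
      rcases lt_or_eq_of_le (Metric.mem_closedBall.mp hcb') with h | h
      · exact hxnb (Metric.mem_ball.mpr h)
      · exact hxs (Metric.mem_sphere.mpr h)
    rw [gradMat_eq_zero fun ht => hxcb (hUsupp ht), hv0]
  have hbp : b ^ p = (5:ℝ)^n := by
    rw [hb, ← Real.rpow_natCast (5:ℝ) n, ← Real.rpow_mul (by norm_num : (0:ℝ) ≤ 5),
      div_mul_cancel₀ _ hp0.ne']
  have step2 : ∫ x in S', v (gradMat U x) = ∫ x in S, v (gradMat u x) := by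
    rw [← hpre]
    have key : ∀ x, v (gradMat U x) = (5:ℝ)^n * v (gradMat u (T x)) := by
      intro x
      rw [hgrad x, hhom b hb0, hbp]
    calc ∫ x in T ⁻¹' S, v (gradMat U x)
        = ∫ x in T ⁻¹' S, (5:ℝ)^n * v (gradMat u (T x)) :=
          integral_congr_ae (ae_of_all _ fun x => key x)
      _ = (5:ℝ)^n * ∫ x in T ⁻¹' S, v (gradMat u (T x)) := integral_const_mul _ _
      _ = (5:ℝ)^n * (((5:ℝ)^n)⁻¹ * ∫ y in S, v (gradMat u y)) := by
          rw [setint_T c (fun y => v (gradMat u y)) S]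
      _ = ∫ y in S, v (gradMat u y) := by
          rw [← mul_assoc, mul_inv_cancel₀ (by positivity), one_mul]
  exact step1.trans step2

end Stmt8Aux

/-- convexity of `H^ϱ`: for `u₁, u₂ ∈ W^{1,p}₀(B(0,1);ℝᵐ)` and `λ ∈ [0,1]`
there is `u ∈ W^{1,p}₀(B(0,1);ℝᵐ)` with
`∫_{B_ϱ} v(∇u) = λ∫_{B_ϱ} v(∇u₁) + (1-λ)∫_{B_ϱ} v(∇u₂)` for every continuous positively
`p`-homogeneous `v`, where `B_ϱ = B(0,1) ∩ {ϱ·x < 0}`. -/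
theorem stmt8 {m n : ℕ} (hn : 2 ≤ n) (p : ℝ) (hp : 1 < p)
    (ϱ : Vec n) (hϱ : ‖ϱ‖ = 1)
    (u₁ u₂ : Vec n → Vec m) (h₁ : MemW1p0Ball p u₁) (h₂ : MemW1p0Ball p u₂)
    (l : ℝ) (hl0 : 0 ≤ l) (hl1 : l ≤ 1) :
    ∃ u : Vec n → Vec m, MemW1p0Ball p u ∧
      ∀ v : Mat m n → ℝ, Continuous v →
        (∀ α : ℝ, 0 ≤ α → ∀ s : Mat m n, v (α • s) = α ^ p * v s) →
        ∫ x in Metric.ball (0 : Vec n) 1 ∩ {x : Vec n | ⟪ϱ, x⟫ < 0}, v (gradMat u x) =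
          l * (∫ x in Metric.ball (0 : Vec n) 1 ∩ {x : Vec n | ⟪ϱ, x⟫ < 0},
                v (gradMat u₁ x)) +
          (1 - l) * ∫ x in Metric.ball (0 : Vec n) 1 ∩ {x : Vec n | ⟪ϱ, x⟫ < 0},
                v (gradMat u₂ x) := by
  classical
  have hp0 : (0:ℝ) < p := lt_trans one_pos hp
  have hϱ0 : ϱ ≠ 0 := fun h => by rw [h, norm_zero] at hϱ; norm_num at hϱ
  obtain ⟨w, hwϱ, hw0⟩ : ∃ w : Vec n, ⟪ϱ, w⟫ = 0 ∧ w ≠ 0 := by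
    have hne : (Submodule.span ℝ {ϱ})ᗮ ≠ ⊥ := by
      intro hbot
      have h1 := Submodule.finrank_add_finrank_orthogonal
        (K := Submodule.span ℝ {ϱ}) (E := Vec n)
      rw [hbot, finrank_bot, finrank_span_singleton hϱ0, finrank_euclideanSpace_fin] at h1
      omega
    obtain ⟨w, hw, hw0⟩ := Submodule.exists_mem_ne_zero_of_ne_bot hne
    exact ⟨w, Submodule.mem_orthogonal_singleton_iff_inner_right.mp hw, hw0⟩
  have hwn : (0:ℝ) < ‖w‖ := norm_pos_iff.mpr hw0
  set x₀ : Vec n := (1/(2*‖w‖)) • w with hx₀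
  have hx₀n : ‖x₀‖ = 1/2 := by
    rw [hx₀, norm_smul, Real.norm_eq_abs, abs_of_nonneg (by positivity)]
    field_simp
  have hx₀ϱ : ⟪ϱ, x₀⟫ = 0 := by
    rw [hx₀, real_inner_smul_right, hwϱ, mul_zero]
  obtain ⟨U₁, hU₁, hU₁s, hU₁int⟩ :=
    Stmt8Aux.rescale hp ϱ hϱ (0 : Vec n) (by simp) (by simp) h₁
  obtain ⟨U₂, hU₂, hU₂s, hU₂int⟩ :=
    Stmt8Aux.rescale hp ϱ hϱ x₀ (le_of_eq hx₀n) hx₀ϱ h₂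
  set a : ℝ := l ^ p⁻¹ with ha
  set b : ℝ := (1-l) ^ p⁻¹ with hb
  have hl1' : (0:ℝ) ≤ 1 - l := by linarith
  have ha0 : 0 ≤ a := Real.rpow_nonneg hl0 _
  have hb0 : 0 ≤ b := Real.rpow_nonneg hl1' _
  have hap : a ^ p = l := by
    rw [ha, ← Real.rpow_mul hl0, inv_mul_cancel₀ hp0.ne', Real.rpow_one]
  have hbp : b ^ p = 1 - l := by
    rw [hb, ← Real.rpow_mul hl1', inv_mul_cancel₀ hp0.ne', Real.rpow_one]
  set u : Vec n → Vec m := fun x => a • U₁ x + b • U₂ x with hu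
  have hdisj : ∀ x : Vec n, x ∉ tsupport U₁ ∨ x ∉ tsupport U₂ := by
    intro x
    by_contra h
    push_neg at h
    obtain ⟨h1', h2'⟩ := h
    have d1 : dist x 0 ≤ 1/5 := Metric.mem_closedBall.mp (hU₁s h1')
    have d2 : dist x x₀ ≤ 1/5 := Metric.mem_closedBall.mp (hU₂s h2')
    have htri : dist x₀ (0 : Vec n) ≤ dist x₀ x + dist x 0 := dist_triangle _ _ _
    rw [dist_zero_right, hx₀n, dist_comm x₀ x] at htri
    linarith
  have hgradu : ∀ x, gradMat u x = a • gradMat U₁ x + b • gradMat U₂ x :=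
    fun x => Stmt8Aux.gradMat_combo hU₁.1 hU₂.1 a b x
  have hudiff : Differentiable ℝ u :=
    fun x => ((hU₁.1 x).const_smul a).add ((hU₂.1 x).const_smul b)
  refine ⟨u, ⟨hudiff, ?_, ?_, ?_⟩, ?_⟩
  · refine closure_minimal ?_ Metric.isClosed_closedBall
    intro x hx
    have hor : U₁ x ≠ 0 ∨ U₂ x ≠ 0 := by
      by_contra hcon
      push_neg at hcon
      apply hx
      simp only [hu, hcon.1, hcon.2, smul_zero, add_zero]
    rcases hor with h | h
    · have hxs := hU₁s (subset_closure (Function.mem_support.mpr h))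
      exact Metric.closedBall_subset_closedBall (by norm_num) hxs
    · have hxs := hU₂s (subset_closure (Function.mem_support.mpr h))
      refine Metric.closedBall_subset_closedBall' ?_ hxs
      rw [dist_zero_right, hx₀n]
      norm_num
  · exact (hU₁.2.2.1.const_smul a).add (hU₂.2.2.1.const_smul b)
  · rw [show gradMat u = fun x => a • gradMat U₁ x + b • gradMat U₂ x from funext hgradu]
    exact (hU₁.2.2.2.const_smul a).add (hU₂.2.2.2.const_smul b)
  · intro v hv hhom
    have hv0 : v 0 = 0 := Stmt8Aux.vzero hp0 hhom
    have hpt : ∀ x, v (gradMat u x)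
        = l * v (gradMat U₁ x) + (1-l) * v (gradMat U₂ x) := by
      intro x
      rcases hdisj x with h | h
      · have hz : gradMat U₁ x = 0 := Stmt8Aux.gradMat_eq_zero h
        rw [hgradu x, hz, smul_zero, zero_add, hhom b hb0 _, hbp, hv0]
        ring
      · have hz : gradMat U₂ x = 0 := Stmt8Aux.gradMat_eq_zero h
        rw [hgradu x, hz, smul_zero, add_zero, hhom a ha0 _, hap, hv0]
        ring
    set S := Metric.ball (0 : Vec n) 1 ∩ {x : Vec n | ⟪ϱ, x⟫ < 0} with hS
    have hint1 : IntegrableOn (fun x => v (gradMat U₁ x)) S volume :=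
      (Stmt8Aux.integrable_v_comp hp hv hhom hU₁.2.2.2).integrableOn
    have hint2 : IntegrableOn (fun x => v (gradMat U₂ x)) S volume :=
      (Stmt8Aux.integrable_v_comp hp hv hhom hU₂.2.2.2).integrableOn
    calc ∫ x in S, v (gradMat u x)
        = ∫ x in S, (l * v (gradMat U₁ x) + (1-l) * v (gradMat U₂ x)) :=
          integral_congr_ae (ae_of_all _ fun x => hpt x)
      _ = l * (∫ x in S, v (gradMat U₁ x)) + (1-l) * ∫ x in S, v (gradMat U₂ x) := by
          rw [integral_add (hint1.const_mul l) (hint2.const_mul (1-l))]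
          congr 1
          · exact integral_const_mul l _
          · exact integral_const_mul (1-l) _
      _ = l * (∫ x in S, v (gradMat u₁ x)) + (1-l) * ∫ x in S, v (gradMat u₂ x) :=
          congrArg₂ (fun A B : ℝ => l * A + (1-l) * B)
            (hU₁int v hv hhom) (hU₂int v hv hhom)
end
end
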